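/- For fixed π₁ ∈ (0,1) and any probability vectors p₂,…,p_M on K classes (M ≥ 3), ∑_{k=1}^K D_GJS_π(e_k, p₂,…,p_M) ≥ ∑_{k=1}^K D_JS_{π'}(e_k, u), where u is the uniform distribution, π' = [π₁, 1−π₁], with equality if and only if p₂ = ⋯ = p_M = u. -/

import Mathlib

open Real Finset

/-- Shannon entropy of a finite probability vector (convention `0 * log 0 = 0`). -/
noncomputable def shannonH {K : ℕ} (p : Fin K → ℝ) : ℝ := ∑ k, -(p k * Real.log (p k))

/-- One-hot probability vector at class `c`. -/
noncomputable def onehot {K : ℕ} (c : Fin K) : Fin K → ℝ := fun k => if k = c then 1 else 0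

lemma strictConvexOn_phi {c : ℝ} (hc : 0 < c) :
    StrictConvexOn ℝ (Set.Ici (0:ℝ)) (fun x => Real.negMulLog (c + x) - Real.negMulLog x) := by
  apply StrictMonoOn.strictConvexOn_of_deriv (convex_Ici 0)
  · exact ((Real.continuous_negMulLog.comp (continuous_const.add continuous_id)).sub
      Real.continuous_negMulLog).continuousOn
  · rw [interior_Ici]
    have hd : ∀ x ∈ Set.Ioi (0:ℝ), deriv (fun x => Real.negMulLog (c + x) - Real.negMulLog x) x
        = Real.log x - Real.log (c + x) := by
      intro x hx
      have hx0 : (0:ℝ) < x := hx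
      have h1 : HasDerivAt (fun x => Real.negMulLog (c + x)) ((-Real.log (c+x) - 1) * 1) x :=
        (Real.hasDerivAt_negMulLog (by positivity : c + x ≠ 0)).comp x
          ((hasDerivAt_id x).const_add c)
      have h2 := Real.hasDerivAt_negMulLog hx0.ne'
      have h3 := (h1.sub h2).deriv
      change deriv ((fun x => Real.negMulLog (c + x)) - Real.negMulLog) x = _; rw [h3]; ring
    intro x hx y hy hxy
    rw [hd x hx, hd y hy]
    have hx0 : (0:ℝ) < x := hx
    have hy0 : (0:ℝ) < y := hy
    have h4 : Real.log (x * (c + y)) < Real.log (y * (c + x)) := by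
      apply Real.log_lt_log (by positivity)
      nlinarith
    rw [Real.log_mul hx0.ne' (by positivity), Real.log_mul hy0.ne' (by positivity)] at h4
    linarith

set_option maxHeartbeats 2000000 in
theorem gjs_sum_lower_bound {K M : ℕ} [NeZero M] (hM : 3 ≤ M) (hK : 0 < K)
    (w : Fin M → ℝ) (hw : ∀ i, 0 < w i) (hw1 : ∑ i, w i = 1)
    (p : Fin M → Fin K → ℝ)
    (hp : ∀ i : Fin M, i ≠ 0 → (∀ k, 0 ≤ p i k) ∧ ∑ k, p i k = 1) :
    (∑ k : Fin K, (shannonH (fun j => w 0 * onehot k j + (1 - w 0) * ((1 : ℝ) / K))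
            - w 0 * shannonH (onehot k)
            - (1 - w 0) * shannonH (fun _ : Fin K => (1 : ℝ) / K)))
      ≤ ∑ k : Fin K, (shannonH (fun j => w 0 * onehot k j + ∑ i ∈ Finset.univ.erase 0, w i * p i j)
            - w 0 * shannonH (onehot k)
            - ∑ i ∈ Finset.univ.erase 0, w i * shannonH (p i))
    ∧ ((∑ k : Fin K, (shannonH (fun j => w 0 * onehot k j + ∑ i ∈ Finset.univ.erase 0, w i * p i j)
            - w 0 * shannonH (onehot k)
            - ∑ i ∈ Finset.univ.erase 0, w i * shannonH (p i)))
        = (∑ k : Fin K, (shannonH (fun j => w 0 * onehot k j + (1 - w 0) * ((1 : ℝ) / K))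
            - w 0 * shannonH (onehot k)
            - (1 - w 0) * shannonH (fun _ : Fin K => (1 : ℝ) / K)))
        ↔ ∀ i : Fin M, i ≠ 0 → p i = (fun _ : Fin K => (1 : ℝ) / K)) := by
  classical
  have hK' : (0:ℝ) < (K:ℝ) := by exact_mod_cast hK
  set t : Finset (Fin M) := Finset.univ.erase 0 with ht
  have h1t : (⟨1, by omega⟩ : Fin M) ∈ t := by
    refine Finset.mem_erase.2 ⟨?_, Finset.mem_univ _⟩
    intro h
    have h2 := congrArg Fin.val h
    simp [Fin.val_zero] at h2
  have hp' : ∀ i ∈ t, (∀ k, 0 ≤ p i k) ∧ ∑ k, p i k = 1 :=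
    fun i hi => hp i (Finset.mem_erase.1 hi).1
  set s : ℝ := ∑ i ∈ t, w i with hsdef
  have hs_pos : 0 < s := Finset.sum_pos (fun i _ => hw i) ⟨_, h1t⟩
  have hs_eq : s = 1 - w 0 := by
    have h := Finset.add_sum_erase Finset.univ w (Finset.mem_univ (0 : Fin M))
    rw [hw1] at h
    have h2 : w 0 + s = 1 := by rw [hsdef, ht]; exact h
    linarith
  have hm_nonneg : ∀ jj : Fin K, 0 ≤ ∑ i ∈ t, w i * p i jj := fun jj =>
    Finset.sum_nonneg fun i hi => mul_nonneg (hw i).le ((hp' i hi).1 jj)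
  have hm_sum : (∑ k : Fin K, ∑ i ∈ t, w i * p i k) = s := by
    rw [Finset.sum_comm, hsdef]
    refine Finset.sum_congr rfl fun i hi => ?_
    rw [← Finset.mul_sum, (hp' i hi).2, mul_one]
  -- entropy basics
  have hsh : ∀ (q : Fin K → ℝ), shannonH q = ∑ j, Real.negMulLog (q j) := by
    intro q; unfold shannonH; simp [Real.negMulLog, neg_mul]
  have honehot : ∀ k : Fin K, shannonH (onehot k) = 0 := by
    intro k; unfold shannonH onehot
    refine Finset.sum_eq_zero fun j _ => ?_
    by_cases h : j = k <;> simp [h]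
  have hmixsum : ∀ (q : Fin K → ℝ) (k : Fin K),
      (∑ j, Real.negMulLog (w 0 * onehot k j + q j))
        = (Real.negMulLog (w 0 + q k) - Real.negMulLog (q k)) + ∑ j, Real.negMulLog (q j) := by
    intro q k
    have h1 : ∀ j : Fin K, Real.negMulLog (w 0 * onehot k j + q j)
        = (if j = k then Real.negMulLog (w 0 + q j) - Real.negMulLog (q j) else 0)
            + Real.negMulLog (q j) := by
      intro j; unfold onehot
      by_cases h : j = k
      · simp [h]
      · simp [h]
    rw [Finset.sum_congr rfl fun j _ => h1 j, Finset.sum_add_distrib,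
      Finset.sum_ite_eq' Finset.univ k]
    simp
  set Cp : ℝ := ∑ i ∈ t, w i * shannonH (p i) with hCp
  set Hu : ℝ := shannonH (fun _ : Fin K => (1:ℝ)/K) with hHu
  have hHuval : Hu = (K:ℝ) * Real.negMulLog (1/(K:ℝ)) := by
    rw [hHu, hsh, Finset.sum_const, Finset.card_univ, Fintype.card_fin, nsmul_eq_mul]
  have EP : ∀ (q : Fin K → ℝ) (C : ℝ),
      (∑ k : Fin K, (shannonH (fun j => w 0 * onehot k j + q j)
          - w 0 * shannonH (onehot k) - C))
        = (∑ k, (Real.negMulLog (w 0 + q k) - Real.negMulLog (q k)))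
          + (K:ℝ) * ((∑ j, Real.negMulLog (q j)) - C) := by
    intro q C
    have h1 : ∀ k : Fin K, shannonH (fun j => w 0 * onehot k j + q j)
          - w 0 * shannonH (onehot k) - C
        = (Real.negMulLog (w 0 + q k) - Real.negMulLog (q k))
            + ((∑ j, Real.negMulLog (q j)) - C) := by
      intro k
      rw [honehot k, hsh]
      rw [hmixsum q k]
      ring
    rw [Finset.sum_congr rfl fun k _ => h1 k, Finset.sum_add_distrib, Finset.sum_const,
      Finset.card_univ, Fintype.card_fin, nsmul_eq_mul]
  -- Jensen I
  have hone_div_K : (∑ _k : Fin K, (1:ℝ)/K) = 1 := by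
    rw [Finset.sum_const, Finset.card_univ, Fintype.card_fin, nsmul_eq_mul]; field_simp
  have hconv := strictConvexOn_phi (hw 0)
  have hmemI : ∀ k ∈ (Finset.univ : Finset (Fin K)),
      (∑ i ∈ t, w i * p i k) ∈ Set.Ici (0:ℝ) := fun k _ => hm_nonneg k
  have hcent : (∑ k : Fin K, ((1:ℝ)/K) • (∑ i ∈ t, w i * p i k)) = s * (1/(K:ℝ)) := by
    simp only [smul_eq_mul]
    rw [← Finset.mul_sum, hm_sum]; ring
  have hJ1' := hconv.convexOn.map_sum_le (t := Finset.univ)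
      (w := fun _ : Fin K => (1:ℝ)/K) (p := fun k => ∑ i ∈ t, w i * p i k)
      (fun k _ => by positivity) hone_div_K hmemI
  rw [hcent] at hJ1'
  simp only [smul_eq_mul] at hJ1'
  have hKinv : (K:ℝ) * (1/K) = 1 := by field_simp
  have hJ1 : (K:ℝ) * (Real.negMulLog (w 0 + s * (1/K)) - Real.negMulLog (s * (1/K)))
      ≤ ∑ k, (Real.negMulLog (w 0 + ∑ i ∈ t, w i * p i k)
          - Real.negMulLog (∑ i ∈ t, w i * p i k)) := by
    rw [← Finset.mul_sum] at hJ1'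
    have h2 := mul_le_mul_of_nonneg_left hJ1' hK'.le
    rwa [← mul_assoc, hKinv, one_mul] at h2
  have hJ1eqc : (∑ k, (Real.negMulLog (w 0 + ∑ i ∈ t, w i * p i k)
          - Real.negMulLog (∑ i ∈ t, w i * p i k)))
        = (K:ℝ) * (Real.negMulLog (w 0 + s * (1/K)) - Real.negMulLog (s * (1/K)))
      → ∀ k : Fin K, (∑ i ∈ t, w i * p i k) = s * (1/(K:ℝ)) := by
    intro heq k
    have hle : (∑ k : Fin K, ((1:ℝ)/K) •
          ((fun x => Real.negMulLog (w 0 + x) - Real.negMulLog x) (∑ i ∈ t, w i * p i k)))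
        ≤ (fun x => Real.negMulLog (w 0 + x) - Real.negMulLog x)
            (∑ k : Fin K, ((1:ℝ)/K) • (∑ i ∈ t, w i * p i k)) := by
      rw [hcent]
      simp only [smul_eq_mul]
      rw [← Finset.mul_sum, heq, ← mul_assoc]
      rw [(by field_simp : (1:ℝ)/K * K = 1), one_mul]
    have hpair := hconv.eq_of_le_map_sum (fun k _ => by positivity) hone_div_K hmemI hle
    have hallk : ∀ k' : Fin K, (∑ i ∈ t, w i * p i k') = (∑ i ∈ t, w i * p i k) :=
      fun k' => hpair (Finset.mem_univ k') (Finset.mem_univ k)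
    have hKm : (K:ℝ) * (∑ i ∈ t, w i * p i k) = s := by
      rw [← hm_sum, Finset.sum_congr rfl fun k' _ => hallk k', Finset.sum_const,
        Finset.card_univ, Fintype.card_fin, nsmul_eq_mul]
    field_simp at hKm ⊢
    linarith
  -- Jensen II
  have hv1 : (∑ i ∈ t, w i / s) = 1 := by
    rw [← Finset.sum_div, ← hsdef, div_self hs_pos.ne']
  have hconc := Real.strictConcaveOn_negMulLog
  have hmemII : ∀ j : Fin K, ∀ i ∈ t, p i j ∈ Set.Ici (0:ℝ) := fun j i hi => (hp' i hi).1 j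
  have hcent2 : ∀ j : Fin K, (∑ i ∈ t, (w i / s) • p i j) = (∑ i ∈ t, w i * p i j)/s := by
    intro j; simp only [smul_eq_mul]; rw [Finset.sum_div]
    exact Finset.sum_congr rfl fun i _ => by ring
  have hS2term : ∀ j : Fin K, (∑ i ∈ t, (w i / s) * Real.negMulLog (p i j))
      ≤ Real.negMulLog ((∑ i ∈ t, w i * p i j)/s) := by
    intro j
    have h := hconc.concaveOn.le_map_sum (fun i _ => (div_pos (hw i) hs_pos).le) hv1 (hmemII j)
    rw [hcent2 j] at h
    simpa using h
  have hS2eqc : ∀ j : Fin K,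
      Real.negMulLog ((∑ i ∈ t, w i * p i j)/s) = (∑ i ∈ t, (w i / s) * Real.negMulLog (p i j))
      → ∀ i ∈ t, p i j = (∑ i ∈ t, w i * p i j)/s := by
    intro j heq i hi
    have h := (hconc.map_sum_eq_iff (fun i _ => div_pos (hw i) hs_pos) hv1 (hmemII j)).1 ?_ i hi
    · rw [hcent2 j] at h; exact h
    · rw [hcent2 j]; simp only [smul_eq_mul]; exact heq
  -- bridge
  set S2 : ℝ := ∑ j, (Real.negMulLog ((∑ i ∈ t, w i * p i j)/s)
      - ∑ i ∈ t, (w i / s) * Real.negMulLog (p i j)) with hS2def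
  have hS2nonneg : 0 ≤ S2 := Finset.sum_nonneg fun j _ => sub_nonneg.2 (hS2term j)
  have hmbar_sum : (∑ j : Fin K, (∑ i ∈ t, w i * p i j)/s) = 1 := by
    rw [← Finset.sum_div, hm_sum, div_self hs_pos.ne']
  have hB : (∑ j, Real.negMulLog (∑ i ∈ t, w i * p i j))
      = Real.negMulLog s + s * ∑ j, Real.negMulLog ((∑ i ∈ t, w i * p i j)/s) := by
    have h1 : ∀ j : Fin K, Real.negMulLog (∑ i ∈ t, w i * p i j)
        = ((∑ i ∈ t, w i * p i j)/s) * Real.negMulLog s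
            + s * Real.negMulLog ((∑ i ∈ t, w i * p i j)/s) := by
      intro j
      calc Real.negMulLog (∑ i ∈ t, w i * p i j)
          = Real.negMulLog (s * ((∑ i ∈ t, w i * p i j)/s)) := by
            congr 1; field_simp
        _ = _ := Real.negMulLog_mul s _
    rw [Finset.sum_congr rfl fun j _ => h1 j, Finset.sum_add_distrib, ← Finset.sum_mul,
      hmbar_sum, one_mul, ← Finset.mul_sum]
  have hCpval : Cp = s * ∑ j, ∑ i ∈ t, (w i / s) * Real.negMulLog (p i j) := by
    rw [hCp]
    calc ∑ i ∈ t, w i * shannonH (p i)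
        = ∑ i ∈ t, ∑ j, w i * Real.negMulLog (p i j) := by
          refine Finset.sum_congr rfl fun i _ => ?_; rw [hsh, Finset.mul_sum]
      _ = ∑ j, ∑ i ∈ t, w i * Real.negMulLog (p i j) := Finset.sum_comm
      _ = s * ∑ j, ∑ i ∈ t, (w i / s) * Real.negMulLog (p i j) := by
          rw [Finset.mul_sum]; refine Finset.sum_congr rfl fun j _ => ?_
          rw [Finset.mul_sum]; refine Finset.sum_congr rfl fun i _ => ?_
          field_simp
  have hKNM : (K:ℝ) * Real.negMulLog (s * (1/K)) = Real.negMulLog s + s * Hu := by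
    rw [Real.negMulLog_mul, hHuval]; field_simp
  have hbridge : ((∑ j, Real.negMulLog (∑ i ∈ t, w i * p i j)) - Cp)
      - ((K:ℝ) * Real.negMulLog (s * (1/K)) - s * Hu) = s * S2 := by
    rw [hB, hCpval, hKNM, hS2def, Finset.sum_sub_distrib, mul_sub]; ring
  -- assemble
  have E1 := EP (fun j => ∑ i ∈ t, w i * p i j) Cp
  have E2 := EP (fun _ => (1 - w 0) * ((1:ℝ)/K)) ((1 - w 0) * Hu)
  rw [E1, E2]
  simp only [Finset.sum_const, Finset.card_univ, Fintype.card_fin, nsmul_eq_mul]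
  rw [← hs_eq]
  have heq5 : (K:ℝ) * ((∑ j, Real.negMulLog (∑ i ∈ t, w i * p i j)) - Cp)
      = (K:ℝ) * ((K:ℝ) * Real.negMulLog (s * (1/K)) - s * Hu) + (K:ℝ) * (s * S2) := by
    linear_combination (K:ℝ) * hbridge
  have hKsS2 : 0 ≤ (K:ℝ) * (s * S2) :=
    mul_nonneg hK'.le (mul_nonneg hs_pos.le hS2nonneg)
  constructor
  · linarith [hJ1, heq5, hKsS2]
  constructor
  · intro heq
    have h8 : (K:ℝ) * (s * S2) ≤ 0 := by linarith [hJ1, heq5, heq]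
    have h7 : S2 = 0 := by
      have h7' : S2 ≤ 0 := by nlinarith [mul_pos hK' hs_pos]
      linarith
    rw [h7, mul_zero, mul_zero, add_zero] at heq5
    have h6 : (∑ k, (Real.negMulLog (w 0 + ∑ i ∈ t, w i * p i k)
            - Real.negMulLog (∑ i ∈ t, w i * p i k)))
        = (K:ℝ) * (Real.negMulLog (w 0 + s * (1/K)) - Real.negMulLog (s * (1/K))) := by
      linarith [heq, heq5]
    have hmk := hJ1eqc h6
    have h9 := (Finset.sum_eq_zero_iff_of_nonneg
        (fun j (_ : j ∈ (Finset.univ : Finset (Fin K))) => sub_nonneg.2 (hS2term j))).1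
        (hS2def ▸ h7)
    intro i hine
    have hit : i ∈ t := Finset.mem_erase.2 ⟨hine, Finset.mem_univ i⟩
    funext jj
    have h10 := h9 jj (Finset.mem_univ jj)
    have h11 := hS2eqc jj (by linarith) i hit
    show p i jj = 1/(K:ℝ)
    rw [h11, hmk jj]
    field_simp
  · intro hpu
    have hmk : ∀ jj : Fin K, (∑ i ∈ t, w i * p i jj) = s * (1/(K:ℝ)) := by
      intro jj
      calc ∑ i ∈ t, w i * p i jj = ∑ i ∈ t, w i * (1/(K:ℝ)) :=
            Finset.sum_congr rfl fun i hi => by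
              simp [hpu i (Finset.mem_erase.1 hi).1]
        _ = s * (1/(K:ℝ)) := by rw [← Finset.sum_mul, ← hsdef]
    have hCpu : Cp = s * Hu := by
      rw [hCp]
      calc ∑ i ∈ t, w i * shannonH (p i) = ∑ i ∈ t, w i * Hu :=
            Finset.sum_congr rfl fun i hi => by
              rw [hpu i (Finset.mem_erase.1 hi).1, ← hHu]
        _ = s * Hu := by rw [← Finset.sum_mul, ← hsdef]
    have hphi : (∑ k, (Real.negMulLog (w 0 + ∑ i ∈ t, w i * p i k)
            - Real.negMulLog (∑ i ∈ t, w i * p i k)))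
        = (K:ℝ) * (Real.negMulLog (w 0 + s * (1/K)) - Real.negMulLog (s * (1/K))) := by
      rw [Finset.sum_congr rfl fun k _ => by rw [hmk k], Finset.sum_const, Finset.card_univ,
        Fintype.card_fin, nsmul_eq_mul]
    have hBu : (∑ j, Real.negMulLog (∑ i ∈ t, w i * p i j))
        = (K:ℝ) * Real.negMulLog (s * (1/K)) := by
      rw [Finset.sum_congr rfl fun j _ => by rw [hmk j], Finset.sum_const, Finset.card_univ,
        Fintype.card_fin, nsmul_eq_mul]
    rw [hphi, hBu, hCpu]
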